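/- Let G be an affine algebraic group with Hopf 2-cocycle J, and let p ∈ O(G) be a primitive element. Then for all α ∈ O(G), R^J(p, α) = (J − J₂₁)(p, α) = (J₂₁⁻¹ − J⁻¹)(p, α), where R^J := J₂₁⁻¹ * J. -/

import Mathlib

open TensorProduct

noncomputable section

/-- Convolution product of two `ℂ`-valued functionals on a `ℂ`-coalgebra. -/
def conv {C : Type} [AddCommGroup C] [Module ℂ C] [Coalgebra ℂ C]
    (f g : C →ₗ[ℂ] ℂ) : C →ₗ[ℂ] ℂ :=
  LinearMap.mul' ℂ ℂ ∘ₗ TensorProduct.map f g ∘ₗ Coalgebra.comul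

variable {H : Type} [CommRing H] [HopfAlgebra ℂ H]

/-- `a ⊗ b ⊗ c ↦ Σ J(a₁b₁ ⊗ c) J(a₂ ⊗ b₂)`. -/
def cocycleLHS (J : H ⊗[ℂ] H →ₗ[ℂ] ℂ) : (H ⊗[ℂ] H) ⊗[ℂ] H →ₗ[ℂ] ℂ :=
  conv (J ∘ₗ TensorProduct.map (LinearMap.mul' ℂ H) LinearMap.id)
    (LinearMap.mul' ℂ ℂ ∘ₗ TensorProduct.map J Coalgebra.counit)

/-- `a ⊗ b ⊗ c ↦ Σ J(a ⊗ b₁c₁) J(b₂ ⊗ c₂)`. -/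
def cocycleRHS (J : H ⊗[ℂ] H →ₗ[ℂ] ℂ) : (H ⊗[ℂ] H) ⊗[ℂ] H →ₗ[ℂ] ℂ :=
  conv (J ∘ₗ TensorProduct.map LinearMap.id (LinearMap.mul' ℂ H)
        ∘ₗ (TensorProduct.assoc ℂ H H H).toLinearMap)
    (LinearMap.mul' ℂ ℂ ∘ₗ TensorProduct.map Coalgebra.counit J
        ∘ₗ (TensorProduct.assoc ℂ H H H).toLinearMap)

/-- A Hopf 2-cocycle for `H`: a convolution-invertible functional on `H ⊗ H` satisfying
`Σ J(a₁b₁, c) J(a₂, b₂) = Σ J(a, b₁c₁) J(b₂, c₂)` and `J(a,1) = ε(a) = J(1,a)`. -/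
structure IsHopf2Cocycle (J : H ⊗[ℂ] H →ₗ[ℂ] ℂ) : Prop where
  invertible : ∃ J' : H ⊗[ℂ] H →ₗ[ℂ] ℂ,
    conv J J' = Coalgebra.counit ∧ conv J' J = Coalgebra.counit
  cocycle : cocycleLHS J = cocycleRHS J
  norm_right : ∀ a : H, J (a ⊗ₜ[ℂ] (1 : H)) = Coalgebra.counit a
  norm_left : ∀ a : H, J ((1 : H) ⊗ₜ[ℂ] a) = Coalgebra.counit a


lemma counit_of_primitive (p : H)
    (hp : Coalgebra.comul (R := ℂ) p = p ⊗ₜ[ℂ] (1 : H) + (1 : H) ⊗ₜ[ℂ] p) :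
    Coalgebra.counit (R := ℂ) p = 0 := by
  have h0 : (Coalgebra.counit (R := ℂ) (A := H)).rTensor H (Coalgebra.comul p)
      = (1 : ℂ) ⊗ₜ[ℂ] p := Coalgebra.rTensor_counit_comul p
  rw [hp] at h0
  have h1 := congrArg (fun x => (TensorProduct.lid ℂ ℂ)
    ((Coalgebra.counit (R := ℂ) (A := H)).lTensor ℂ x)) h0
  simp only [map_add, LinearMap.rTensor_tmul, LinearMap.lTensor_tmul,
    Bialgebra.counit_one, TensorProduct.lid_tmul, smul_eq_mul, mul_one, one_mul] at h1
  linear_combination h1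

/-- Evaluate a convolution product on a pure tensor, given finite Sweedler
representations of the comultiplications of both factors. -/
lemma conv_tmul (f g : H ⊗[ℂ] H →ₗ[ℂ] ℂ) (a b : H) {ι κ : Type} (s : Finset ι) (t : Finset κ)
    (xa ya : ι → H) (xb yb : κ → H)
    (ha : Coalgebra.comul (R := ℂ) a = ∑ i ∈ s, xa i ⊗ₜ[ℂ] ya i)
    (hb : Coalgebra.comul (R := ℂ) b = ∑ j ∈ t, xb j ⊗ₜ[ℂ] yb j) :
    conv f g (a ⊗ₜ[ℂ] b)
      = ∑ i ∈ s, ∑ j ∈ t, f (xa i ⊗ₜ[ℂ] xb j) * g (ya i ⊗ₜ[ℂ] yb j) := by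
  simp only [conv, LinearMap.comp_apply]
  have hcom : Coalgebra.comul (R := ℂ) (a ⊗ₜ[ℂ] b)
      = TensorProduct.tensorTensorTensorComm ℂ H H H H
          (Coalgebra.comul (R := ℂ) a ⊗ₜ[ℂ] Coalgebra.comul (R := ℂ) b) := rfl
  rw [hcom, ha, hb]
  simp [TensorProduct.sum_tmul, TensorProduct.tmul_sum, map_sum,
    TensorProduct.tensorTensorTensorComm_tmul]
  exact Finset.sum_comm

lemma sum_counit_smul_left {α : H} {ι : Type} (r : Coalgebra.Repr ℂ α ι) :
    ∑ j ∈ r.index, Coalgebra.counit (R := ℂ) (r.left j) • r.right j = α := by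
  have h := congrArg (TensorProduct.lid ℂ H) (Coalgebra.sum_counit_tmul_eq r)
  rw [map_sum] at h
  simp only [TensorProduct.lid_tmul, one_smul] at h
  exact h

lemma sum_counit_smul_right {α : H} {ι : Type} (r : Coalgebra.Repr ℂ α ι) :
    ∑ j ∈ r.index, Coalgebra.counit (R := ℂ) (r.right j) • r.left j = α := by
  have h := congrArg (TensorProduct.rid ℂ H) (Coalgebra.sum_tmul_counit_eq r)
  rw [map_sum] at h
  simp only [TensorProduct.rid_tmul, one_smul] at h
  exact h

/-- For `p` primitive, `conv f g (p ⊗ α) = f(p ⊗ α) + g(p ⊗ α)` when both `f` and `g`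
restrict to the counit on `1 ⊗ H`. -/
lemma conv_prim_left (f g : H ⊗[ℂ] H →ₗ[ℂ] ℂ) (p α : H)
    (hp : Coalgebra.comul (R := ℂ) p = p ⊗ₜ[ℂ] (1 : H) + (1 : H) ⊗ₜ[ℂ] p)
    (hf : ∀ b : H, f ((1 : H) ⊗ₜ[ℂ] b) = Coalgebra.counit b)
    (hg : ∀ b : H, g ((1 : H) ⊗ₜ[ℂ] b) = Coalgebra.counit b) :
    conv f g (p ⊗ₜ[ℂ] α) = f (p ⊗ₜ[ℂ] α) + g (p ⊗ₜ[ℂ] α) := by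
  obtain r := Coalgebra.Repr.arbitrary ℂ α
  have ha : Coalgebra.comul (R := ℂ) p
      = ∑ i ∈ (Finset.univ : Finset (Fin 2)), ![p, 1] i ⊗ₜ[ℂ] ![(1 : H), p] i := by
    rw [hp]; simp [Fin.sum_univ_two]
  rw [conv_tmul f g p α Finset.univ r.index ![p, 1] ![(1 : H), p] r.left r.right ha r.eq.symm]
  have t1 : ∑ j ∈ r.index, f (p ⊗ₜ[ℂ] r.left j) * Coalgebra.counit (R := ℂ) (r.right j)
      = f (p ⊗ₜ[ℂ] α) := by
    conv_rhs => rw [← sum_counit_smul_right r]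
    simp [TensorProduct.tmul_sum, TensorProduct.tmul_smul, map_smul, smul_eq_mul, mul_comm]
  have t2 : ∑ j ∈ r.index, Coalgebra.counit (R := ℂ) (r.left j) * g (p ⊗ₜ[ℂ] r.right j)
      = g (p ⊗ₜ[ℂ] α) := by
    conv_rhs => rw [← sum_counit_smul_left r]
    simp [TensorProduct.tmul_sum, TensorProduct.tmul_smul, map_smul, smul_eq_mul]
  rw [Fin.sum_univ_two]
  simp only [Matrix.cons_val_zero, Matrix.cons_val_one, Matrix.head_cons, hf, hg]
  rw [t1, t2]

/-- For `p` primitive, `conv f g (α ⊗ p) = f(α ⊗ p) + g(α ⊗ p)` when both `f` and `g`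
restrict to the counit on `H ⊗ 1`. -/
lemma conv_prim_right (f g : H ⊗[ℂ] H →ₗ[ℂ] ℂ) (p α : H)
    (hp : Coalgebra.comul (R := ℂ) p = p ⊗ₜ[ℂ] (1 : H) + (1 : H) ⊗ₜ[ℂ] p)
    (hf : ∀ b : H, f (b ⊗ₜ[ℂ] (1 : H)) = Coalgebra.counit b)
    (hg : ∀ b : H, g (b ⊗ₜ[ℂ] (1 : H)) = Coalgebra.counit b) :
    conv f g (α ⊗ₜ[ℂ] p) = f (α ⊗ₜ[ℂ] p) + g (α ⊗ₜ[ℂ] p) := by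
  obtain r := Coalgebra.Repr.arbitrary ℂ α
  have hb : Coalgebra.comul (R := ℂ) p
      = ∑ i ∈ (Finset.univ : Finset (Fin 2)), ![p, 1] i ⊗ₜ[ℂ] ![(1 : H), p] i := by
    rw [hp]; simp [Fin.sum_univ_two]
  rw [conv_tmul f g α p r.index Finset.univ r.left r.right ![p, 1] ![(1 : H), p] r.eq.symm hb]
  have t1 : ∑ j ∈ r.index, f (r.left j ⊗ₜ[ℂ] p) * Coalgebra.counit (R := ℂ) (r.right j)
      = f (α ⊗ₜ[ℂ] p) := by
    conv_rhs => rw [← sum_counit_smul_right r]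
    simp [TensorProduct.sum_tmul, ← TensorProduct.smul_tmul', map_smul, smul_eq_mul, mul_comm]
  have t2 : ∑ j ∈ r.index, Coalgebra.counit (R := ℂ) (r.left j) * g (r.right j ⊗ₜ[ℂ] p)
      = g (α ⊗ₜ[ℂ] p) := by
    conv_rhs => rw [← sum_counit_smul_left r]
    simp [TensorProduct.sum_tmul, ← TensorProduct.smul_tmul', map_smul, smul_eq_mul]
  simp only [Fin.sum_univ_two, Matrix.cons_val_zero, Matrix.cons_val_one, Matrix.head_cons,
    hf, hg]
  rw [Finset.sum_add_distrib, t1, t2]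

lemma conv_one_left (f g : H ⊗[ℂ] H →ₗ[ℂ] ℂ) (b : H)
    (hf : ∀ c : H, f ((1 : H) ⊗ₜ[ℂ] c) = Coalgebra.counit c) :
    conv f g ((1 : H) ⊗ₜ[ℂ] b) = g ((1 : H) ⊗ₜ[ℂ] b) := by
  obtain r := Coalgebra.Repr.arbitrary ℂ b
  have ha : Coalgebra.comul (R := ℂ) (1 : H)
      = ∑ i ∈ (Finset.univ : Finset (Fin 1)), (1 : H) ⊗ₜ[ℂ] (1 : H) := by
    simp [Algebra.TensorProduct.one_def]
  rw [conv_tmul f g 1 b Finset.univ r.index (fun _ => 1) (fun _ => 1) r.left r.right ha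
    r.eq.symm]
  simp only [Fin.sum_univ_one, hf]
  conv_rhs => rw [show b = ∑ j ∈ r.index, Coalgebra.counit (R := ℂ) (r.left j) • r.right j from
    (sum_counit_smul_left r).symm]
  simp [TensorProduct.tmul_sum, TensorProduct.tmul_smul, map_smul, smul_eq_mul]

lemma conv_one_right (f g : H ⊗[ℂ] H →ₗ[ℂ] ℂ) (b : H)
    (hg : ∀ c : H, g (c ⊗ₜ[ℂ] (1 : H)) = Coalgebra.counit c) :
    conv f g (b ⊗ₜ[ℂ] (1 : H)) = f (b ⊗ₜ[ℂ] (1 : H)) := by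
  obtain r := Coalgebra.Repr.arbitrary ℂ b
  have hb : Coalgebra.comul (R := ℂ) (1 : H)
      = ∑ i ∈ (Finset.univ : Finset (Fin 1)), (1 : H) ⊗ₜ[ℂ] (1 : H) := by
    simp [Algebra.TensorProduct.one_def]
  rw [conv_tmul f g b 1 r.index Finset.univ r.left r.right (fun _ => 1) (fun _ => 1)
    r.eq.symm hb]
  simp only [Fin.sum_univ_one, hg]
  conv_rhs => rw [show b = ∑ j ∈ r.index, Coalgebra.counit (R := ℂ) (r.right j) • r.left j from
    (sum_counit_smul_right r).symm]
  simp [TensorProduct.sum_tmul, ← TensorProduct.smul_tmul', map_smul, smul_eq_mul, mul_comm]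

lemma counit_tmul (a b : H) :
    Coalgebra.counit (R := ℂ) (a ⊗ₜ[ℂ] b)
      = Coalgebra.counit (R := ℂ) a * Coalgebra.counit (R := ℂ) b := by
  rw [TensorProduct.counit_tmul, smul_eq_mul, mul_comm]

/-- Let `H = O(G)` be the commutative Hopf algebra of an affine algebraic group, `J` a
Hopf 2-cocycle with convolution inverse `Jinv`, and `p ∈ H` primitive.  Then for every
`α`, `R^J(p, α) = (J − J₂₁)(p, α) = (J₂₁⁻¹ − J⁻¹)(p, α)`, where
`R^J(a,b) = Σ Jinv(b₁ ⊗ a₁) J(a₂ ⊗ b₂)`. -/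
theorem RJ_on_primitive (J Jinv : H ⊗[ℂ] H →ₗ[ℂ] ℂ)
    (hJ : IsHopf2Cocycle J)
    (hinv : conv J Jinv = Coalgebra.counit ∧ conv Jinv J = Coalgebra.counit)
    (p : H) (hp : Coalgebra.comul (R := ℂ) p = p ⊗ₜ[ℂ] (1 : H) + (1 : H) ⊗ₜ[ℂ] p) :
    let RJ : H ⊗[ℂ] H →ₗ[ℂ] ℂ :=
      conv (Jinv ∘ₗ (TensorProduct.comm ℂ H H).toLinearMap) J
    ∀ α : H,
      RJ (p ⊗ₜ[ℂ] α) = J (p ⊗ₜ[ℂ] α) - J (α ⊗ₜ[ℂ] p)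
      ∧ RJ (p ⊗ₜ[ℂ] α) = Jinv (α ⊗ₜ[ℂ] p) - Jinv (p ⊗ₜ[ℂ] α) := by
  intro RJ α
  have hεp : Coalgebra.counit (R := ℂ) p = 0 := counit_of_primitive p hp
  -- `Jinv` is also normalized, since it is the convolution inverse of the normalized `J`.
  have hJil : ∀ b : H, Jinv ((1 : H) ⊗ₜ[ℂ] b) = Coalgebra.counit b := by
    intro b
    have h := LinearMap.congr_fun hinv.1 ((1 : H) ⊗ₜ[ℂ] b)
    rw [conv_one_left J Jinv b hJ.norm_left] at h
    rw [h, _root_.counit_tmul, Bialgebra.counit_one, one_mul]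
  have hJir : ∀ b : H, Jinv (b ⊗ₜ[ℂ] (1 : H)) = Coalgebra.counit b := by
    intro b
    have h := LinearMap.congr_fun hinv.2 (b ⊗ₜ[ℂ] (1 : H))
    rw [conv_one_right Jinv J b hJ.norm_right] at h
    rw [h, _root_.counit_tmul, Bialgebra.counit_one, mul_one]
  -- Compute `RJ (p ⊗ α)`.
  have E0 : RJ (p ⊗ₜ[ℂ] α) = Jinv (α ⊗ₜ[ℂ] p) + J (p ⊗ₜ[ℂ] α) := by
    show conv (Jinv ∘ₗ (TensorProduct.comm ℂ H H).toLinearMap) J (p ⊗ₜ[ℂ] α) = _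
    rw [conv_prim_left (Jinv ∘ₗ (TensorProduct.comm ℂ H H).toLinearMap) J p α hp
      (fun b => by simpa using hJir b) hJ.norm_left]
    simp
  have E1 : J (p ⊗ₜ[ℂ] α) + Jinv (p ⊗ₜ[ℂ] α) = 0 := by
    have h := LinearMap.congr_fun hinv.1 (p ⊗ₜ[ℂ] α)
    rw [conv_prim_left J Jinv p α hp hJ.norm_left hJil] at h
    rw [h, _root_.counit_tmul, hεp, zero_mul]
  have E2 : J (α ⊗ₜ[ℂ] p) + Jinv (α ⊗ₜ[ℂ] p) = 0 := by
    have h := LinearMap.congr_fun hinv.1 (α ⊗ₜ[ℂ] p)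
    rw [conv_prim_right J Jinv p α hp hJ.norm_right hJir] at h
    rw [h, _root_.counit_tmul, hεp, mul_zero]
  exact ⟨by linear_combination E0 + E2, by linear_combination E0 + E1⟩
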